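/- Let p : ℝ^d → ℝ^m be a polynomial map with p(0) = 0 and let p* : ℝ[x₁,…,x_m] → ℝ[x₁,…,x_d] be the algebra homomorphism q ↦ q∘p. Then M_p maps Im(φ_m) into Im(φ_d) and satisfies M_p ∘ φ_m = φ_d ∘ p*; moreover, the restriction of M_p to Im(φ_m) is the unique such algebra homomorphism: any algebra homomorphism N : Im(φ_m) → Im(φ_d) (for the shuffle products) with N ∘ φ_m = φ_d ∘ p* coincides with M_p on Im(φ_m). -/

import Mathlib

noncomputable section

open MeasureTheory

/-- Words in the alphabet `{1,…,d}`. -/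
abbrev Word (d : ℕ) := List (Fin d)

/-- `T(ℝ^d)`: the real vector space with basis the words in `{1,…,d}`. -/
abbrev Tens (d : ℕ) := Word d →₀ ℝ

namespace SigPaper

variable {d m s : ℕ}

/-- The basis word `w` as an element of `T(ℝ^d)`. -/
def wordT (w : Word d) : Tens d := Finsupp.single w 1

/-- The shuffle product of two words. -/
def shuffleWord : Word d → Word d → Tens d
  | [], v => Finsupp.single v 1
  | u, [] => Finsupp.single u 1
  | a :: u, b :: v =>
      Finsupp.mapDomain (fun w => a :: w) (shuffleWord u (b :: v)) +
      Finsupp.mapDomain (fun w => b :: w) (shuffleWord (a :: u) v)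
  termination_by u v => u.length + v.length
  decreasing_by all_goals simp +arith +decide

/-- The shuffle product `⧢` on `T(ℝ^d)`, the bilinear extension of the shuffle of words. -/
def shuffle (x y : Tens d) : Tens d :=
  x.sum fun u a => y.sum fun v b => (a * b) • shuffleWord u v

/-- The operator appending the letter `i` at the end of every word (`T_i^+`). -/
def appendLetter (i : Fin d) (x : Tens d) : Tens d :=
  Finsupp.mapDomain (fun w => w ++ [i]) x

/-- The right half-shuffle of two words: `w ≻ (v∘i) = (w ⧢ v)∘i` (zero if the right word
is empty). -/
def halfShuffleWord (u v : Word d) : Tens d :=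
  match v.getLast? with
  | none => 0
  | some i => appendLetter i (shuffleWord u v.dropLast)

/-- The right half-shuffle `≻`, extended bilinearly. -/
def halfShuffle (x y : Tens d) : Tens d :=
  x.sum fun u a => y.sum fun v b => (a * b) • halfShuffleWord u v

/-- The letter-appending operator `T_i^+`. -/
def Tplus (i : Fin d) : Tens d → Tens d := appendLetter i

/-- `T_i^-` on a word: removes the last letter if it equals `i`, otherwise `0`. -/
def TminusWord (i : Fin d) (w : Word d) : Tens d :=
  match w.getLast? with
  | none => 0
  | some j => if j = i then Finsupp.single w.dropLast 1 else 0

/-- The letter-removing operator `T_i^-`. -/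
def Tminus (i : Fin d) (x : Tens d) : Tens d := x.sum fun w a => a • TminusWord i w

/-- The single-letter word `i` in `T(ℝ^d)`. -/
def letterT (i : Fin d) : Tens d := Finsupp.single [i] 1

/-- Shuffle powers `x^{⧢ n}`. -/
def shufflePow (x : Tens d) : ℕ → Tens d
  | 0 => Finsupp.single [] 1
  | n + 1 => shuffle (shufflePow x n) x

/-- Shuffle product of a list of elements. -/
def shuffleList : List (Tens d) → Tens d
  | [] => Finsupp.single [] 1
  | x :: xs => shuffle x (shuffleList xs)

/-- Image of the monomial `x^t` under `φ_d`: the shuffle product of its letters. -/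
def phiMon (t : Fin d →₀ ℕ) : Tens d :=
  shuffleList ((List.finRange d).map fun i => shufflePow (letterT i) (t i))

/-- The embedding `φ_d : ℝ[x₁,…,x_d] → (T(ℝ^d), ⧢)` sending the monomial
`x_{i₁}⋯x_{i_l}` to `i₁ ⧢ ⋯ ⧢ i_l`. -/
def phi (f : MvPolynomial (Fin d) ℝ) : Tens d :=
  f.support.sum fun t => f.coeff t • phiMon t

/-- A polynomial map `p : ℝ^d → ℝ^m`, given by `m` polynomials in `d` variables. -/
abbrev PolyMap (d m : ℕ) := Fin m → MvPolynomial (Fin d) ℝ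

/-- `k_p^{ij} = φ_d(∂p_i/∂x_j) ∈ T(ℝ^d)`. -/
def kP (p : PolyMap d m) (i : Fin m) (j : Fin d) : Tens d :=
  phi (MvPolynomial.pderiv j (p i))

/-- Auxiliary: `M_p` on reversed words, so that `M_p(e) = e` and
`M_p(w∘i) = Σ_j (M_p(w) ⧢ k_p^{ij})∘j`. -/
def MpRev (p : PolyMap d m) : List (Fin m) → Tens d
  | [] => Finsupp.single [] 1
  | i :: w => ∑ j : Fin d, appendLetter j (shuffle (MpRev p w) (kP p i j))

/-- `M_p` on a word. -/
def MpWord (p : PolyMap d m) (w : Word m) : Tens d := MpRev p w.reverse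

/-- The linear map `M_p : T(ℝ^m) → T(ℝ^d)`. -/
def Mp (p : PolyMap d m) (x : Tens m) : Tens d := x.sum fun w a => a • MpWord p w

/-- `X : [0,L] → ℝ^d` is piecewise continuously differentiable: there is a partition
`0 = t₀ ≤ t₁ ≤ ⋯ ≤ t_n = L` such that `X` is `C¹` on each subinterval. -/
def PiecewiseC1 (X : ℝ → Fin d → ℝ) (L : ℝ) : Prop :=
  ∃ (n : ℕ) (t : Fin (n + 1) → ℝ), Monotone t ∧ t 0 = 0 ∧ t (Fin.last n) = L ∧
    ∀ k : Fin n, ContDiffOn ℝ 1 X (Set.Icc (t k.castSucc) (t k.succ))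

/-- Iterated-integral signature coefficients, on reversed words:
`⟨σ(X|_{[0,t]}), w∘i⟩ = ∫_0^t ⟨σ(X|_{[0,r]}), w⟩ Ẋ^i_r dr`. -/
def sigRev (X : ℝ → Fin d → ℝ) : List (Fin d) → ℝ → ℝ
  | [], _ => 1
  | i :: w, t => ∫ r in (0:ℝ)..t, sigRev X w r * deriv (fun u => X u i) r

/-- `⟨σ(X|_{[0,L]}), w⟩`, the signature coefficient of the word `w`. -/
def sigWord (X : ℝ → Fin d → ℝ) (L : ℝ) (w : Word d) : ℝ := sigRev X w.reverse L

/-- The pairing `⟨σ(X|_{[0,L]}), x⟩` for `x ∈ T(ℝ^d)`. -/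
def sigT (X : ℝ → Fin d → ℝ) (L : ℝ) (x : Tens d) : ℝ :=
  x.sum fun w a => a * sigWord X L w

/-- The transformed path `p(X) : t ↦ p(X(t))`. -/
def pPath (p : PolyMap d m) (X : ℝ → Fin d → ℝ) : ℝ → Fin m → ℝ :=
  fun t i => MvPolynomial.eval (X t) (p i)

/-- The translated polynomial map `p̃(y) = p(y + x₀) − p(x₀)`, satisfying `p̃(0) = 0`. -/
def ptilde (p : PolyMap d m) (x0 : Fin d → ℝ) : PolyMap d m := fun i =>
  MvPolynomial.aeval (fun j => MvPolynomial.X j + MvPolynomial.C (x0 j)) (p i) -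
    MvPolynomial.C (MvPolynomial.eval x0 (p i))

/-- The pairing `⟨exp_∘(L·𝟙), x⟩` for `x ∈ T(ℝ¹)`: the coefficient of the word of
length `n` in `exp_∘(L·𝟙)` is `Lⁿ/n!`. -/
def expPair (L : ℝ) (x : Tens 1) : ℝ :=
  x.sum fun w a => a * (L ^ w.length / (w.length.factorial : ℝ))

/-- The pairing `⟨σ(X) ∘ σ(Y), x⟩` of the concatenation product of two signatures with
`x ∈ T(ℝ^d)`: on a word `w` it is `Σ_{u∘v = w} ⟨σ(X), u⟩·⟨σ(Y), v⟩`. -/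
def concatPair (X Y : ℝ → Fin d → ℝ) (L : ℝ) (x : Tens d) : ℝ :=
  x.sum fun w a =>
    a * ∑ k ∈ Finset.range (w.length + 1), sigWord X L (w.take k) * sigWord Y L (w.drop k)


def shL : Tens d →ₗ[ℝ] Tens d →ₗ[ℝ] Tens d :=
  Finsupp.lsum ℝ fun u => LinearMap.toSpanSingleton ℝ _
    (Finsupp.lsum ℝ fun v => LinearMap.toSpanSingleton ℝ (Tens d) (shuffleWord u v))

lemma shuffle_eq (x y : Tens d) : shuffle x y = shL x y := by
  rw [shuffle, shL, Finsupp.lsum_apply]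
  simp only [Finsupp.sum, LinearMap.sum_apply]
  refine Finset.sum_congr rfl fun u _ => ?_
  rw [LinearMap.toSpanSingleton_apply, LinearMap.smul_apply, Finsupp.lsum_apply]
  simp only [Finsupp.sum, Finset.smul_sum]
  refine Finset.sum_congr rfl fun v _ => ?_
  rw [LinearMap.toSpanSingleton_apply, smul_smul]

lemma shuffle_single (u v : Word d) (a b : ℝ) :
    shuffle (Finsupp.single u a) (Finsupp.single v b) = (a*b) • shuffleWord u v := by
  rw [shuffle_eq, shL, Finsupp.lsum_single, LinearMap.toSpanSingleton_apply,
    LinearMap.smul_apply, Finsupp.lsum_single, LinearMap.toSpanSingleton_apply, smul_smul]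

lemma shuffle_addl (x x' y : Tens d) : shuffle (x + x') y = shuffle x y + shuffle x' y := by
  simp [shuffle_eq]
lemma shuffle_addr (x y y' : Tens d) : shuffle x (y + y') = shuffle x y + shuffle x y' := by
  simp [shuffle_eq]
lemma shuffle_smull (c : ℝ) (x y : Tens d) : shuffle (c • x) y = c • shuffle x y := by
  simp [shuffle_eq]
lemma shuffle_smulr (c : ℝ) (x y : Tens d) : shuffle x (c • y) = c • shuffle x y := by
  simp [shuffle_eq]
lemma shuffle_zerol (y : Tens d) : shuffle 0 y = 0 := by simp [shuffle_eq]
lemma shuffle_zeror (x : Tens d) : shuffle x 0 = 0 := by simp [shuffle_eq]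
lemma shuffle_suml {ι : Type*} (s : Finset ι) (f : ι → Tens d) (y : Tens d) :
    shuffle (∑ i ∈ s, f i) y = ∑ i ∈ s, shuffle (f i) y := by
  simp [shuffle_eq]
lemma shuffle_sumr {ι : Type*} (s : Finset ι) (f : ι → Tens d) (x : Tens d) :
    shuffle x (∑ i ∈ s, f i) = ∑ i ∈ s, shuffle x (f i) := by
  simp [shuffle_eq]

lemma shuffleWord_nill (v : Word d) : shuffleWord [] v = Finsupp.single v 1 := by rw [shuffleWord]
lemma shuffleWord_nilr (u : Word d) : shuffleWord u [] = Finsupp.single u 1 := by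
  cases u with
  | nil => rw [shuffleWord]
  | cons a u => rw [shuffleWord]; simp

lemma shuffle_nill (y : Tens d) : shuffle (Finsupp.single ([] : Word d) 1) y = y := by
  induction y using Finsupp.induction_linear with
  | zero => exact shuffle_zeror _
  | add f g hf hg => rw [shuffle_addr, hf, hg]
  | single v b => rw [shuffle_single, shuffleWord_nill, one_mul, Finsupp.smul_single, smul_eq_mul, mul_one]

lemma shuffle_nilr (x : Tens d) : shuffle x (Finsupp.single ([] : Word d) 1) = x := by
  induction x using Finsupp.induction_linear with
  | zero => exact shuffle_zerol _
  | add f g hf hg => rw [shuffle_addl, hf, hg]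
  | single v b => rw [shuffle_single, shuffleWord_nilr, mul_one, Finsupp.smul_single, smul_eq_mul, mul_one]

lemma shuffleWord_cons (a b : Fin d) (u v : Word d) : shuffleWord (a :: u) (b :: v) =
      Finsupp.mapDomain (fun w => a :: w) (shuffleWord u (b :: v)) +
      Finsupp.mapDomain (fun w => b :: w) (shuffleWord (a :: u) v) := by rw [shuffleWord]

lemma shuffleWord_comm (u v : Word d) : shuffleWord u v = shuffleWord v u := by
  induction u, v using shuffleWord.induct with
  | case1 v => rw [shuffleWord_nill, shuffleWord_nilr]
  | case2 u h => rw [shuffleWord_nill, shuffleWord_nilr]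
  | case3 a u b v h1 h2 => rw [shuffleWord_cons, shuffleWord_cons, h1, h2, add_comm]

lemma prep_single (a : Fin d) (u : Word d) (c : ℝ) :
    Finsupp.mapDomain (fun w : Word d => a :: w) (Finsupp.single u c) = Finsupp.single (a :: u) c :=
  Finsupp.mapDomain_single

lemma shuffle_comm (x y : Tens d) : shuffle x y = shuffle y x := by
  induction x using Finsupp.induction_linear with
  | zero => rw [shuffle_zerol, shuffle_zeror]
  | add f g hf hg => rw [shuffle_addl, shuffle_addr, hf, hg]
  | single u c =>
    induction y using Finsupp.induction_linear with
    | zero => rw [shuffle_zerol, shuffle_zeror]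
    | add f g hf hg => rw [shuffle_addl, shuffle_addr, hf, hg]
    | single v e => rw [shuffle_single, shuffle_single, shuffleWord_comm, mul_comm]

lemma shuffle_prepend (a b : Fin d) (x y : Tens d) :
    shuffle (Finsupp.mapDomain (fun w : Word d => a :: w) x) (Finsupp.mapDomain (fun w : Word d => b :: w) y) =
    Finsupp.mapDomain (fun w : Word d => a :: w) (shuffle x (Finsupp.mapDomain (fun w : Word d => b :: w) y)) +
    Finsupp.mapDomain (fun w : Word d => b :: w) (shuffle (Finsupp.mapDomain (fun w : Word d => a :: w) x) y) := by
  induction x using Finsupp.induction_linear with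
  | zero => simp [shuffle_zerol]
  | add f g hf hg => simp only [Finsupp.mapDomain_add, shuffle_addl, hf, hg]; abel
  | single u c =>
    induction y using Finsupp.induction_linear with
    | zero => simp [shuffle_zeror]
    | add f g hf hg => simp only [Finsupp.mapDomain_add, shuffle_addr, hf, hg]; abel
    | single v e =>
      rw [prep_single, prep_single, shuffle_single, shuffleWord_cons, smul_add,
        shuffle_single, shuffle_single, Finsupp.mapDomain_smul, Finsupp.mapDomain_smul]

lemma shuffleWord_assoc_aux (n : ℕ) : ∀ (u v w : Word d), u.length + v.length + w.length ≤ n →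
    shuffle (shuffleWord u v) (Finsupp.single w 1) =
    shuffle (Finsupp.single u 1) (shuffleWord v w) := by
  induction n with
  | zero =>
    intro u v w h
    have hu : u = [] := List.eq_nil_of_length_eq_zero (by omega)
    subst hu
    rw [shuffleWord_nill, shuffle_nill, shuffle_single, one_mul, one_smul]
  | succ n IH =>
    intro u v w h
    match u, v, w with
    | [], v, w =>
      rw [shuffleWord_nill, shuffle_nill, shuffle_single, one_mul, one_smul]
    | a :: u', [], w =>
      rw [shuffleWord_nilr, shuffleWord_nill]
    | a :: u', b :: v', [] =>
      rw [shuffle_nilr, shuffleWord_nilr, shuffle_single, one_mul, one_smul]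
    | a :: u', b :: v', c :: w' =>
      simp only [List.length_cons] at h
      have e1 := IH u' (b :: v') (c :: w') (by simp; omega)
      have e2 := IH (a :: u') v' (c :: w') (by simp; omega)
      have e3 := IH (a :: u') (b :: v') w' (by simp; omega)
      rw [shuffleWord_cons a b, shuffle_addl, ← prep_single c w' 1,
        shuffle_prepend a c, shuffle_prepend b c, prep_single c w' 1, e1, e2,
        add_add_add_comm, ← Finsupp.mapDomain_add, ← shuffle_addl, ← shuffleWord_cons a b, e3,
        shuffleWord_cons b c]
      simp only [shuffle_addr, Finsupp.mapDomain_add]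
      rw [← prep_single a u' 1, shuffle_prepend a b, shuffle_prepend a c]
      abel

lemma shuffle_single_one_assoc (u v w : Word d) :
    shuffle (shuffleWord u v) (Finsupp.single w 1) =
    shuffle (Finsupp.single u 1) (shuffleWord v w) :=
  shuffleWord_assoc_aux (u.length + v.length + w.length) u v w le_rfl

lemma single_eq_smul (w : Word d) (c : ℝ) :
    (Finsupp.single w c : Tens d) = c • Finsupp.single w 1 := by
  rw [Finsupp.smul_single, smul_eq_mul, mul_one]

lemma shuffle_assoc (x y z : Tens d) :
    shuffle (shuffle x y) z = shuffle x (shuffle y z) := by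
  induction x using Finsupp.induction_linear with
  | zero => rw [shuffle_zerol, shuffle_zerol, shuffle_zerol]
  | add f g hf hg => rw [shuffle_addl, shuffle_addl, shuffle_addl, hf, hg]
  | single u a =>
    induction y using Finsupp.induction_linear with
    | zero => rw [shuffle_zerol, shuffle_zeror, shuffle_zerol]
    | add f g hf hg => rw [shuffle_addr, shuffle_addl, shuffle_addl, shuffle_addr, hf, hg]
    | single v b =>
      induction z using Finsupp.induction_linear with
      | zero => rw [shuffle_zeror, shuffle_zeror, shuffle_zeror]
      | add f g hf hg => rw [shuffle_addr, shuffle_addr, shuffle_addr, hf, hg]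
      | single w c =>
        rw [shuffle_single, shuffle_single, single_eq_smul w c, shuffle_smulr, shuffle_smull,
          shuffle_single_one_assoc, shuffle_smulr, single_eq_smul u a, shuffle_smull,
          smul_smul, smul_smul]
        congr 1
        ring

-- appendLetter lemmas
lemma appendLetter_add (i : Fin d) (x y : Tens d) :
    appendLetter i (x + y) = appendLetter i x + appendLetter i y := Finsupp.mapDomain_add
lemma appendLetter_smul (i : Fin d) (c : ℝ) (x : Tens d) :
    appendLetter i (c • x) = c • appendLetter i x := Finsupp.mapDomain_smul c x
lemma appendLetter_zero (i : Fin d) : appendLetter i (0 : Tens d) = 0 := Finsupp.mapDomain_zero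
lemma appendLetter_single (i : Fin d) (w : Word d) (a : ℝ) :
    appendLetter i (Finsupp.single w a) = Finsupp.single (w ++ [i]) a := Finsupp.mapDomain_single
lemma appendLetter_sum {ι : Type*} (i : Fin d) (s : Finset ι) (f : ι → Tens d) :
    appendLetter i (∑ k ∈ s, f k) = ∑ k ∈ s, appendLetter i (f k) := by
  classical
  induction s using Finset.induction_on with
  | empty => simp [appendLetter_zero]
  | insert _ _ h ih => rw [Finset.sum_insert h, Finset.sum_insert h, appendLetter_add, ih]

-- Tminus lemmas
lemma Tminus_single (j : Fin d) (w : Word d) (a : ℝ) :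
    Tminus j (Finsupp.single w a) = a • TminusWord j w := by
  rw [Tminus, Finsupp.sum_single_index]; rw [zero_smul]

lemma Tminus_zero (j : Fin d) : Tminus j (0 : Tens d) = 0 := by
  rw [Tminus, Finsupp.sum_zero_index]

lemma Tminus_add (j : Fin d) (x y : Tens d) : Tminus j (x + y) = Tminus j x + Tminus j y := by
  rw [Tminus, Tminus, Tminus, Finsupp.sum_add_index] <;> intros <;>
    simp [add_smul]

lemma Tminus_smul (j : Fin d) (c : ℝ) (x : Tens d) : Tminus j (c • x) = c • Tminus j x := by
  rw [Tminus, Tminus, Finsupp.sum_smul_index, Finsupp.smul_sum] <;>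
    simp [mul_smul, zero_smul]

lemma TminusWord_nil (j : Fin d) : TminusWord j ([] : Word d) = 0 := rfl

lemma TminusWord_concat (j c : Fin d) (u : Word d) :
    TminusWord j (u ++ [c]) = if c = j then Finsupp.single u 1 else 0 := by
  rw [TminusWord]
  simp [List.getLast?_concat, List.dropLast_concat]

lemma shuffleWord_apply_nil (u v : Word d) :
    shuffleWord u v [] = (if u = [] then (1:ℝ) else 0) * (if v = [] then (1:ℝ) else 0) := by
  match u, v with
  | [], v => rw [shuffleWord_nill]; simp [Finsupp.single_apply, eq_comm]
  | a :: u, [] => rw [shuffleWord_nilr]; simp [Finsupp.single_apply]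
  | a :: u, b :: v =>
    rw [shuffleWord_cons]
    rw [Finsupp.add_apply, Finsupp.mapDomain_notin_range, Finsupp.mapDomain_notin_range]
    · simp
    · rintro ⟨w, hw⟩; simp at hw
    · rintro ⟨w, hw⟩; simp at hw

lemma shuffle_apply_nil (x y : Tens d) : shuffle x y [] = x [] * y [] := by
  induction x using Finsupp.induction_linear with
  | zero => simp [shuffle_zerol]
  | add f g hf hg => simp only [shuffle_addl, Finsupp.add_apply, hf, hg]; ring
  | single u a =>
    induction y using Finsupp.induction_linear with
    | zero => simp [shuffle_zeror]
    | add f g hf hg => simp only [shuffle_addr, Finsupp.add_apply, hf, hg]; ring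
    | single v b =>
      rw [shuffle_single, Finsupp.smul_apply, shuffleWord_apply_nil, smul_eq_mul,
        Finsupp.single_apply, Finsupp.single_apply]
      split_ifs <;> ring

lemma appendLetter_apply_nil (i : Fin d) (x : Tens d) : appendLetter i x [] = 0 := by
  rw [appendLetter, Finsupp.mapDomain_notin_range]
  rintro ⟨w, hw⟩; simp at hw

lemma recon (x : Tens d) :
    x = (x []) • Finsupp.single [] 1 + ∑ j, appendLetter j (Tminus j x) := by
  induction x using Finsupp.induction_linear with
  | zero => simp [Tminus_zero, appendLetter_zero]
  | add f g hf hg =>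
    simp only [Tminus_add, Finsupp.add_apply, add_smul]
    conv_lhs => rw [hf, hg]
    simp only [appendLetter_add, Finset.sum_add_distrib]
    abel
  | single w a =>
    rcases List.eq_nil_or_concat w with h | ⟨u, c, h⟩
    · subst h
      simp only [Tminus_single, TminusWord_nil, smul_zero, appendLetter_zero,
        Finset.sum_const_zero, add_zero, Finsupp.single_eq_same]
      rw [Finsupp.smul_single, smul_eq_mul, mul_one]
    · subst h
      simp only [List.concat_eq_append]
      have h1 : (Finsupp.single (u ++ [c]) a : Tens d) [] = 0 := by
        rw [Finsupp.single_apply]; simp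
      rw [h1, zero_smul, zero_add]
      have h2 : ∀ j : Fin d, appendLetter j (Tminus j (Finsupp.single (u ++ [c]) a)) =
          if c = j then Finsupp.single (u ++ [c]) a else 0 := by
        intro j
        rw [Tminus_single, TminusWord_concat]
        split_ifs with h
        · subst h; rw [Finsupp.smul_single, appendLetter_single, smul_eq_mul, mul_one]
        · rw [smul_zero, appendLetter_zero]
      simp only [h2]
      rw [Finset.sum_ite_eq (Finset.univ : Finset (Fin d)) c (fun j => Finsupp.single (u ++ [c]) a)]
      simp

lemma TminusWord_cons (j a : Fin d) (u : Word d) :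
    TminusWord j (a :: u) = Finsupp.mapDomain (fun w : Word d => a :: w) (TminusWord j u) +
      ((if u = ([] : Word d) then (1:ℝ) else 0) * (if a = j then 1 else 0)) •
        Finsupp.single [] 1 := by
  rcases List.eq_nil_or_concat u with h | ⟨u', c, h⟩ <;> subst h
  · rw [TminusWord_nil, Finsupp.mapDomain_zero, zero_add, if_pos rfl, one_mul]
    have h2 : (a :: [] : Word d) = [] ++ [a] := rfl
    rw [h2, TminusWord_concat]
    split_ifs <;> simp [Finsupp.smul_single]
  · simp only [List.concat_eq_append]
    have h2 : (a :: (u' ++ [c]) : Word d) = (a :: u') ++ [c] := rfl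
    rw [h2, TminusWord_concat, TminusWord_concat]
    have hne : (u' ++ [c] : Word d) ≠ [] := by simp
    rw [if_neg hne, zero_mul, zero_smul, add_zero]
    split_ifs
    · rw [Finsupp.mapDomain_single]
    · rw [Finsupp.mapDomain_zero]

lemma Tminus_prepend (j a : Fin d) (x : Tens d) :
    Tminus j (Finsupp.mapDomain (fun w : Word d => a :: w) x) =
      Finsupp.mapDomain (fun w : Word d => a :: w) (Tminus j x) +
      (x [] * (if a = j then 1 else 0)) • Finsupp.single [] 1 := by
  induction x using Finsupp.induction_linear with
  | zero => simp [Tminus_zero]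
  | add f g hf hg =>
    simp only [Finsupp.mapDomain_add, Tminus_add, hf, hg, Finsupp.add_apply, add_mul, add_smul]
    abel
  | single w b =>
    rw [prep_single, Tminus_single, Tminus_single, TminusWord_cons, Finsupp.single_apply,
      smul_add, Finsupp.mapDomain_smul, smul_smul]
    congr 2
    split_ifs <;> ring

lemma Tminus_shuffleWord (j : Fin d) (u v : Word d) :
    Tminus j (shuffleWord u v) =
      shuffle (TminusWord j u) (Finsupp.single v 1) +
      shuffle (Finsupp.single u 1) (TminusWord j v) := by
  induction u, v using shuffleWord.induct with
  | case1 v =>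
    rw [shuffleWord_nill, Tminus_single, one_smul, TminusWord_nil, shuffle_zerol, zero_add,
      shuffle_nill]
  | case2 u h =>
    rw [shuffleWord_nilr, Tminus_single, one_smul, TminusWord_nil, shuffle_zeror, add_zero,
      shuffle_nilr]
  | case3 a u' b v' IH1 IH2 =>
    have hnil1 : shuffleWord u' (b :: v') [] = 0 := by
      rw [shuffleWord_apply_nil]; simp
    have hnil2 : shuffleWord (a :: u') v' [] = 0 := by
      rw [shuffleWord_apply_nil]; simp
    rw [shuffleWord_cons, Tminus_add, Tminus_prepend, Tminus_prepend, hnil1, hnil2]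
    simp only [zero_mul, zero_smul, add_zero]
    rw [IH1, IH2]
    -- now expand the RHS
    rw [TminusWord_cons j a u', TminusWord_cons j b v',
      show (Finsupp.single (b :: v') 1 : Tens d) =
        Finsupp.mapDomain (fun w : Word d => b :: w) (Finsupp.single v' 1) from
        (prep_single b v' 1).symm,
      show (Finsupp.single (a :: u') 1 : Tens d) =
        Finsupp.mapDomain (fun w : Word d => a :: w) (Finsupp.single u' 1) from
        (prep_single a u' 1).symm]
    simp only [shuffle_addl, shuffle_addr, shuffle_smull, shuffle_smulr, ← prep_single,
      shuffle_prepend, Finsupp.mapDomain_add, Finsupp.mapDomain_smul, shuffle_nill, shuffle_nilr]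
    abel

lemma Tminus_shuffle (j : Fin d) (x y : Tens d) :
    Tminus j (shuffle x y) = shuffle (Tminus j x) y + shuffle x (Tminus j y) := by
  induction x using Finsupp.induction_linear with
  | zero => simp [shuffle_zerol, Tminus_zero]
  | add f g hf hg =>
    simp only [shuffle_addl, Tminus_add, hf, hg]; abel
  | single u a =>
    induction y using Finsupp.induction_linear with
    | zero => simp [shuffle_zeror, Tminus_zero]
    | add f g hf hg =>
      simp only [shuffle_addr, Tminus_add, hf, hg]; abel
    | single v b =>
      rw [shuffle_single, Tminus_smul, Tminus_shuffleWord, Tminus_single, Tminus_single,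
        shuffle_smull, shuffle_smulr, single_eq_smul v b, single_eq_smul u a,
        shuffle_smull, shuffle_smulr, smul_add, smul_smul, smul_smul,
        mul_comm b a]

lemma shufflePow_add (x : Tens d) (n k : ℕ) :
    shufflePow x (n + k) = shuffle (shufflePow x n) (shufflePow x k) := by
  induction k with
  | zero => rw [Nat.add_zero, shufflePow, shuffle_nilr]
  | succ k IH => rw [← Nat.add_assoc, shufflePow, shufflePow, IH, shuffle_assoc]

lemma shuffleList_mul (g h : Fin d → Tens d) (l : List (Fin d)) :
    shuffleList (l.map fun i => shuffle (g i) (h i)) =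
      shuffle (shuffleList (l.map g)) (shuffleList (l.map h)) := by
  induction l with
  | nil => rw [List.map_nil, List.map_nil, List.map_nil, shuffleList, shuffle_nilr]
  | cons a l IH =>
    simp only [List.map_cons, shuffleList]
    rw [IH]
    -- (ga ⧢ ha) ⧢ (Lg ⧢ Lh) = (ga ⧢ Lg) ⧢ (ha ⧢ Lh)
    rw [shuffle_assoc, shuffle_assoc]
    congr 1
    rw [← shuffle_assoc, ← shuffle_assoc, shuffle_comm (h a) (shuffleList (l.map g))]

lemma phiMon_zero : phiMon (0 : Fin d →₀ ℕ) = Finsupp.single [] 1 := by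
  rw [phiMon]
  have : ∀ l : List (Fin d),
      shuffleList (l.map fun i => shufflePow (letterT i) ((0 : Fin d →₀ ℕ) i)) =
        Finsupp.single [] 1 := by
    intro l
    induction l with
    | nil => rw [List.map_nil, shuffleList]
    | cons a l IH =>
      rw [List.map_cons, shuffleList, IH, Finsupp.coe_zero, Pi.zero_apply, shufflePow,
        shuffle_nilr]
  exact this _

lemma phiMon_add (t s : Fin d →₀ ℕ) : phiMon (t + s) = shuffle (phiMon t) (phiMon s) := by
  rw [phiMon, phiMon, phiMon, ← shuffleList_mul]
  congr 1
  refine List.map_congr_left fun i _ => ?_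
  rw [Finsupp.add_apply, shufflePow_add]

open MvPolynomial in
lemma phi_def (f : MvPolynomial (Fin d) ℝ) : phi f = Finsupp.sum (AddMonoidAlgebra.coeff f) fun t a => a • phiMon t := rfl

lemma phi_add (f g : MvPolynomial (Fin d) ℝ) : phi (f + g) = phi f + phi g := by
  rw [phi_def, phi_def, phi_def, AddMonoidAlgebra.coeff_add]
  exact Finsupp.sum_add_index' (fun t => zero_smul ℝ _) (fun t a b => add_smul a b _)

lemma phi_smul (c : ℝ) (f : MvPolynomial (Fin d) ℝ) : phi (c • f) = c • phi f := by
  rw [phi_def, phi_def, AddMonoidAlgebra.coeff_smul, Finsupp.sum_smul_index fun t => zero_smul ℝ (phiMon t), Finsupp.smul_sum]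
  exact Finsupp.sum_congr fun t _ => (mul_smul c _ _)

lemma phi_zero : phi (0 : MvPolynomial (Fin d) ℝ) = 0 := by
  rw [phi_def, AddMonoidAlgebra.coeff_zero, Finsupp.sum_zero_index]

lemma phi_monomial (t : Fin d →₀ ℕ) (a : ℝ) :
    phi (MvPolynomial.monomial t a) = a • phiMon t := by
  rw [phi_def, ← MvPolynomial.single_eq_monomial, AddMonoidAlgebra.coeff_single,
    Finsupp.sum_single_index]
  rw [zero_smul]

lemma phi_mul (f g : MvPolynomial (Fin d) ℝ) : phi (f * g) = shuffle (phi f) (phi g) := by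
  induction f using MvPolynomial.induction_on' with
  | add p q hp hq => rw [add_mul, phi_add, phi_add, hp, hq, shuffle_addl]
  | monomial t a =>
    induction g using MvPolynomial.induction_on' with
    | add p q hp hq => rw [mul_add, phi_add, phi_add, hp, hq, shuffle_addr]
    | monomial s b =>
      rw [MvPolynomial.monomial_mul, phi_monomial, phi_monomial, phi_monomial, phiMon_add,
        shuffle_smull, shuffle_smulr, smul_smul]

lemma phi_C (a : ℝ) : phi (MvPolynomial.C (a : ℝ) : MvPolynomial (Fin d) ℝ) =
    a • Finsupp.single [] 1 := by
  rw [show (MvPolynomial.C a : MvPolynomial (Fin d) ℝ) = MvPolynomial.monomial 0 a from rfl,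
    phi_monomial, phiMon_zero]

lemma shuffleList_ones (l : List (Fin d)) (c : Fin d → ℕ) (hc : ∀ k ∈ l, c k = 0) :
    shuffleList (l.map fun k => shufflePow (letterT k) (c k)) = Finsupp.single [] 1 := by
  induction l with
  | nil => rw [List.map_nil, shuffleList]
  | cons a l IH =>
    rw [List.map_cons, shuffleList, IH (fun k hk => hc k (List.mem_cons_of_mem a hk)),
      hc a List.mem_cons_self, shufflePow, shuffle_nilr]

lemma phiMon_single_one (i : Fin d) : phiMon (Finsupp.single i 1) = letterT i := by
  rw [phiMon]
  have key : ∀ l : List (Fin d), l.Nodup → i ∈ l →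
      shuffleList (l.map fun k => shufflePow (letterT k) (Finsupp.single i 1 k)) = letterT i := by
    intro l
    induction l with
    | nil => intro _ h; simp at h
    | cons a l IH =>
      intro hnd hmem
      rw [List.map_cons, shuffleList]
      rcases List.mem_cons.mp hmem with h | h
      · subst h
        have hl : ∀ k ∈ l, Finsupp.single i 1 k = 0 := by
          intro k hk
          have : i ≠ k := fun hak => (List.nodup_cons.mp hnd).1 (hak ▸ hk)
          rw [Finsupp.single_apply, if_neg this]
        rw [shuffleList_ones l _ hl, shuffle_nilr, Finsupp.single_eq_same, shufflePow, shufflePow,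
          shuffle_nill]
      · have hai : Finsupp.single i 1 a = 0 := by
          have : i ≠ a := fun hia => (List.nodup_cons.mp hnd).1 (hia ▸ h)
          rw [Finsupp.single_apply, if_neg this]
        rw [hai, shufflePow, shuffle_nill, IH (List.nodup_cons.mp hnd).2 h]
  exact key _ (List.nodup_finRange d) (List.mem_finRange i)

lemma phi_X (i : Fin d) : phi (MvPolynomial.X i : MvPolynomial (Fin d) ℝ) = letterT i := by
  rw [show (MvPolynomial.X i : MvPolynomial (Fin d) ℝ) =
      MvPolynomial.monomial (Finsupp.single i 1) 1 from rfl, phi_monomial, phiMon_single_one,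
    one_smul]

lemma Tminus_letterT (j i : Fin d) :
    Tminus j (letterT i) = if i = j then Finsupp.single [] 1 else 0 := by
  rw [letterT, Tminus_single, show ([i] : Word d) = [] ++ [i] from rfl, TminusWord_concat,
    one_smul]

lemma Tminus_phi (j : Fin d) (f : MvPolynomial (Fin d) ℝ) :
    Tminus j (phi f) = phi (MvPolynomial.pderiv j f) := by
  induction f using MvPolynomial.induction_on with
  | C a =>
    rw [phi_C, Tminus_smul, Tminus_single, TminusWord_nil, smul_zero, smul_zero,
      MvPolynomial.pderiv_C, phi_zero]
  | add p q hp hq => rw [phi_add, Tminus_add, hp, hq, map_add, phi_add]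
  | mul_X p i hp =>
    rw [phi_mul, Tminus_shuffle, hp, phi_X, Tminus_letterT, MvPolynomial.pderiv_mul,
      phi_add, phi_mul, phi_mul, phi_X]
    congr 1
    rw [MvPolynomial.pderiv_X]
    by_cases h : i = j
    · subst h
      rw [if_pos rfl, Pi.single_eq_same, shuffle_nilr,
        show (1 : MvPolynomial (Fin d) ℝ) = MvPolynomial.C 1 from rfl, phi_C, one_smul,
        shuffle_nilr]
    · rw [if_neg h, Pi.single_eq_of_ne h, phi_zero, shuffle_zeror]

lemma phi_apply_nil (f : MvPolynomial (Fin d) ℝ) :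
    phi f [] = MvPolynomial.constantCoeff f := by
  induction f using MvPolynomial.induction_on with
  | C a => rw [phi_C, Finsupp.smul_apply, Finsupp.single_eq_same, smul_eq_mul, mul_one,
      MvPolynomial.constantCoeff_C]
  | add p q hp hq => rw [phi_add, Finsupp.add_apply, hp, hq, map_add]
  | mul_X p i hp =>
    rw [phi_mul, shuffle_apply_nil, phi_X, letterT, Finsupp.single_apply, map_mul,
      MvPolynomial.constantCoeff_X, hp]
    simp

lemma phi_recon (f : MvPolynomial (Fin d) ℝ) :
    phi f = MvPolynomial.constantCoeff f • Finsupp.single [] 1 +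
      ∑ j, appendLetter j (phi (MvPolynomial.pderiv j f)) := by
  conv_lhs => rw [recon (phi f)]
  rw [phi_apply_nil]
  congr 1
  exact Finset.sum_congr rfl fun j _ => by rw [Tminus_phi]

lemma chain_rule (p : PolyMap d m) (f : MvPolynomial (Fin m) ℝ) (j : Fin d) :
    MvPolynomial.pderiv j (MvPolynomial.bind₁ p f) =
      ∑ i, MvPolynomial.bind₁ p (MvPolynomial.pderiv i f) * MvPolynomial.pderiv j (p i) := by
  induction f using MvPolynomial.induction_on with
  | C a => simp [MvPolynomial.bind₁_C_right, MvPolynomial.pderiv_C]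
  | add f g hf hg =>
    rw [map_add, map_add, hf, hg, ← Finset.sum_add_distrib]
    exact Finset.sum_congr rfl fun i _ => by rw [map_add, map_add, add_mul]
  | mul_X f k hf =>
    rw [map_mul, MvPolynomial.bind₁_X_right, MvPolynomial.pderiv_mul, hf, Finset.sum_mul]
    have key : ∀ i : Fin m,
        MvPolynomial.bind₁ p (MvPolynomial.pderiv i (f * MvPolynomial.X k)) *
          MvPolynomial.pderiv j (p i) =
        MvPolynomial.bind₁ p (MvPolynomial.pderiv i f) * MvPolynomial.pderiv j (p i) * p k +
          (if k = i then MvPolynomial.bind₁ p f * MvPolynomial.pderiv j (p i) else 0) := by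
      intro i
      rw [MvPolynomial.pderiv_mul, map_add, map_mul, map_mul, MvPolynomial.pderiv_X,
        MvPolynomial.bind₁_X_right, add_mul]
      congr 1
      · ring
      · by_cases h : k = i
        · subst h; rw [Pi.single_eq_same, map_one, mul_one, if_pos rfl]
        · rw [Pi.single_eq_of_ne h, map_zero, mul_zero, zero_mul, if_neg h]
    simp only [key]
    rw [Finset.sum_add_distrib, Finset.sum_ite_eq, if_pos (Finset.mem_univ k)]

lemma sum_sub_single (s : Fin d →₀ ℕ) (i : Fin d) (h : 1 ≤ s i) :
    (s - Finsupp.single i 1).sum (fun _ e => e) + 1 = s.sum fun _ e => e := by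
  have hle : Finsupp.single i 1 ≤ s := by
    rw [Finsupp.single_le_iff]; exact h
  have hsum : (s - Finsupp.single i 1) + Finsupp.single i 1 = s := tsub_add_cancel_of_le hle
  conv_rhs => rw [← hsum]
  rw [Finsupp.sum_add_index' (fun _ => rfl) (fun _ a b => rfl), Finsupp.sum_single_index rfl]

lemma totalDegree_pderiv_le (i : Fin d) (f : MvPolynomial (Fin d) ℝ) (n : ℕ)
    (h : f.totalDegree ≤ n + 1) : (MvPolynomial.pderiv i f).totalDegree ≤ n := by
  conv_lhs => rw [MvPolynomial.as_sum f, map_sum]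
  refine (MvPolynomial.totalDegree_finset_sum _ _).trans (Finset.sup_le fun s hs => ?_)
  rw [MvPolynomial.pderiv_monomial]
  by_cases hsi : s i = 0
  · rw [hsi, Nat.cast_zero, mul_zero, map_zero, MvPolynomial.totalDegree_zero]
    exact Nat.zero_le n
  · refine (MvPolynomial.totalDegree_monomial_le _ _).trans ?_
    have h1 := sum_sub_single s i (Nat.one_le_iff_ne_zero.mpr hsi)
    have h2 : s.sum (fun _ e => e) ≤ n + 1 := le_trans (MvPolynomial.le_totalDegree hs) h
    have h3 : ((s - Finsupp.single i 1).sum fun _ => (id : ℕ → ℕ)) =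
        (s - Finsupp.single i 1).sum (fun _ e => e) := rfl
    rw [h3]
    omega

lemma pderiv_eq_zero_of_deg_zero (i : Fin d) (f : MvPolynomial (Fin d) ℝ)
    (h : f.totalDegree = 0) : MvPolynomial.pderiv i f = 0 := by
  conv_lhs => rw [MvPolynomial.as_sum f, map_sum]
  refine Finset.sum_eq_zero fun s hs => ?_
  rw [MvPolynomial.pderiv_monomial]
  have h2 : s.sum (fun _ e => e) = 0 :=
    Nat.le_zero.mp (le_trans (MvPolynomial.le_totalDegree hs) (le_of_eq h))
  have h3 : s i = 0 := by
    by_contra hne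
    have : 1 ≤ s i := Nat.one_le_iff_ne_zero.mpr hne
    have := sum_sub_single s i this
    omega
  rw [h3, Nat.cast_zero, mul_zero, map_zero]

-- Mp lemmas
lemma Mp_single (p : PolyMap d m) (w : Word m) (a : ℝ) :
    Mp p (Finsupp.single w a) = a • MpWord p w := by
  rw [Mp, Finsupp.sum_single_index]; rw [zero_smul]

lemma Mp_zero (p : PolyMap d m) : Mp p 0 = 0 := by rw [Mp, Finsupp.sum_zero_index]

lemma Mp_add (p : PolyMap d m) (x y : Tens m) : Mp p (x + y) = Mp p x + Mp p y := by
  rw [Mp, Mp, Mp, Finsupp.sum_add_index] <;> intros <;> simp [add_smul]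

lemma Mp_smul (p : PolyMap d m) (c : ℝ) (x : Tens m) : Mp p (c • x) = c • Mp p x := by
  rw [Mp, Mp, Finsupp.sum_smul_index, Finsupp.smul_sum] <;> simp [mul_smul, zero_smul]

lemma Mp_sum {ι : Type*} (p : PolyMap d m) (s : Finset ι) (g : ι → Tens m) :
    Mp p (∑ k ∈ s, g k) = ∑ k ∈ s, Mp p (g k) := by
  classical
  induction s using Finset.induction_on with
  | empty => simp [Mp_zero]
  | insert _ _ h ih => rw [Finset.sum_insert h, Finset.sum_insert h, Mp_add, ih]

lemma Mp_nil (p : PolyMap d m) (a : ℝ) :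
    Mp p (Finsupp.single ([] : Word m) a) = a • Finsupp.single ([] : Word d) 1 := by
  rw [Mp_single]; rfl

lemma Mp_appendLetter (p : PolyMap d m) (i : Fin m) (x : Tens m) :
    Mp p (appendLetter i x) = ∑ j, appendLetter j (shuffle (Mp p x) (kP p i j)) := by
  induction x using Finsupp.induction_linear with
  | zero => simp [appendLetter_zero, Mp_zero, shuffle_zerol]
  | add f g hf hg =>
    rw [appendLetter_add, Mp_add, hf, hg, Mp_add, ← Finset.sum_add_distrib]
    exact Finset.sum_congr rfl fun j _ => by rw [shuffle_addl, appendLetter_add]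
  | single w a =>
    rw [appendLetter_single, Mp_single, Mp_single]
    have h1 : MpWord p (w ++ [i]) = ∑ j, appendLetter j (shuffle (MpWord p w) (kP p i j)) := by
      rw [MpWord, show List.reverse (w ++ [i]) = i :: List.reverse w by simp]
      rfl
    rw [h1, Finset.smul_sum]
    refine Finset.sum_congr rfl fun j _ => ?_
    rw [← appendLetter_smul, ← shuffle_smull]

lemma aeval_eq_eval' {k : ℕ} (g : Fin k → ℝ) (q : MvPolynomial (Fin k) ℝ) :
    (MvPolynomial.aeval g) q = MvPolynomial.eval g q := by
  rw [← MvPolynomial.coe_aeval_eq_eval]; rfl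

lemma constantCoeff_bind₁ (p : PolyMap d m)
    (hp : ∀ i, MvPolynomial.eval (0 : Fin d → ℝ) (p i) = 0) (f : MvPolynomial (Fin m) ℝ) :
    MvPolynomial.constantCoeff (MvPolynomial.bind₁ p f) = MvPolynomial.constantCoeff f := by
  rw [← MvPolynomial.eval_zero, ← aeval_eq_eval', MvPolynomial.aeval_bind₁]
  have : (fun i => (MvPolynomial.aeval (0 : Fin d → ℝ)) (p i)) = fun _ : Fin m => (0:ℝ) := by
    funext i; rw [aeval_eq_eval', hp i]
  rw [this]
  have h2 : (MvPolynomial.aeval (fun _ : Fin m => (0:ℝ))) f = MvPolynomial.eval (0 : Fin m → ℝ) f := by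
    rw [aeval_eq_eval']; rfl
  rw [h2, MvPolynomial.eval_zero]

lemma main_step (p : PolyMap d m)
    (hp : ∀ i, MvPolynomial.eval (0 : Fin d → ℝ) (p i) = 0) (f : MvPolynomial (Fin m) ℝ)
    (hIH : ∀ i : Fin m, Mp p (phi (MvPolynomial.pderiv i f)) =
      phi (MvPolynomial.bind₁ p (MvPolynomial.pderiv i f))) :
    Mp p (phi f) = phi (MvPolynomial.bind₁ p f) := by
  conv_lhs => rw [phi_recon f]
  rw [Mp_add, Mp_smul, Mp_nil, Mp_sum, one_smul]
  have h1 : ∀ i : Fin m, Mp p (appendLetter i (phi (MvPolynomial.pderiv i f))) =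
      ∑ j, appendLetter j (shuffle (phi (MvPolynomial.bind₁ p (MvPolynomial.pderiv i f)))
        (kP p i j)) := by
    intro i
    rw [Mp_appendLetter, hIH i]
  simp only [h1]
  rw [Finset.sum_comm]
  have h2 : ∀ j : Fin d,
      (∑ i : Fin m, appendLetter j (shuffle (phi (MvPolynomial.bind₁ p (MvPolynomial.pderiv i f)))
        (kP p i j))) = appendLetter j (phi (MvPolynomial.pderiv j (MvPolynomial.bind₁ p f))) := by
    intro j
    rw [← appendLetter_sum]
    congr 1
    rw [chain_rule]
    have h3 : ∀ i : Fin m,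
        shuffle (phi (MvPolynomial.bind₁ p (MvPolynomial.pderiv i f))) (kP p i j) =
        phi (MvPolynomial.bind₁ p (MvPolynomial.pderiv i f) * MvPolynomial.pderiv j (p i)) := by
      intro i; rw [phi_mul, kP]
    simp only [h3]
    induction (Finset.univ : Finset (Fin m)) using Finset.induction_on with
    | empty => simp [phi_zero]
    | insert _ _ h ih => rw [Finset.sum_insert h, Finset.sum_insert h, phi_add, ih]
  simp only [h2]
  rw [← constantCoeff_bind₁ p hp f]
  exact (phi_recon (MvPolynomial.bind₁ p f)).symm

lemma Mp_phi (p : PolyMap d m)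
    (hp : ∀ i, MvPolynomial.eval (0 : Fin d → ℝ) (p i) = 0) (f : MvPolynomial (Fin m) ℝ) :
    Mp p (phi f) = phi (MvPolynomial.bind₁ p f) := by
  have key : ∀ (n : ℕ) (f : MvPolynomial (Fin m) ℝ), f.totalDegree ≤ n →
      Mp p (phi f) = phi (MvPolynomial.bind₁ p f) := by
    intro n
    induction n with
    | zero =>
      intro f hf
      refine main_step p hp f fun i => ?_
      rw [pderiv_eq_zero_of_deg_zero i f (Nat.le_zero.mp hf), phi_zero, Mp_zero, map_zero,
        phi_zero]
    | succ n IH =>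
      intro f hf
      exact main_step p hp f fun i => IH _ (totalDegree_pderiv_le i f n hf)
  exact key f.totalDegree f le_rfl

/-- `M_p` maps `Im(φ_m)` into `Im(φ_d)` with `M_p ∘ φ_m = φ_d ∘ p*`, and
its restriction to `Im(φ_m)` is the unique such shuffle-algebra homomorphism. -/
theorem Mp_unique_on_image (d m : ℕ) (p : PolyMap d m)
    (hp : ∀ i, MvPolynomial.eval (0 : Fin d → ℝ) (p i) = 0) :
    (∀ f : MvPolynomial (Fin m) ℝ, Mp p (phi f) = phi (MvPolynomial.bind₁ p f)) ∧
    (∀ N : Tens m →ₗ[ℝ] Tens d,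
        (∀ x y : Tens m, x ∈ Set.range (phi (d := m)) → y ∈ Set.range (phi (d := m)) →
            N (shuffle x y) = shuffle (N x) (N y)) →
        (∀ f : MvPolynomial (Fin m) ℝ, N (phi f) = phi (MvPolynomial.bind₁ p f)) →
        ∀ x ∈ Set.range (phi (d := m)), N x = Mp p x) := by
  refine ⟨Mp_phi p hp, fun N hsh hNphi x hx => ?_⟩
  obtain ⟨f, rfl⟩ := hx
  rw [hNphi f, Mp_phi p hp f]

end SigPaper
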